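/- The Q-symmetrization formula: for f ∈ L²(Tⁿ), (P_n f)(t_1,...,t_n) = (1/n!) Σ_{π ∈ S_n} Q_π(t_1,...,t_n) f(t_{π^{-1}(1)},...,t_{π^{-1}(n)}), where Q_π(t_1,...,t_n) = ∏_{1≤i<j≤n, π(i)>π(j)} Q(t_i,t_j). Equivalently, for each π ∈ S_n, (Ψ_π f)(t_1,...,t_n) = Q_{π^{-1}}(t_1,...,t_n) f(t_{π(1)},...,t_{π(n)}). -/

import Mathlib

/-- `Q_π(t_1,…,t_n) = ∏_{i<j, π(i)>π(j)} Q(t_i,t_j)`. -/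
def Qpi {T : Type*} (Q : T → T → ℂ) {n : ℕ} (π : Equiv.Perm (Fin n)) (t : Fin n → T) : ℂ :=
  ∏ p ∈ Finset.univ.filter (fun p : Fin n × Fin n => p.1 < p.2 ∧ π p.2 < π p.1),
    Q (t p.1) (t p.2)

/-- The operator `Ψ_j`. -/
def PsiJ {T : Type*} (Q : T → T → ℂ) {n : ℕ} (j : ℕ) (hj : j + 1 < n)
    (f : (Fin n → T) → ℂ) : (Fin n → T) → ℂ :=
  fun t => Q (t ⟨j, Nat.lt_of_succ_lt hj⟩) (t ⟨j + 1, hj⟩) *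
    f (t ∘ Equiv.swap (⟨j, Nat.lt_of_succ_lt hj⟩ : Fin n) ⟨j + 1, hj⟩)

lemma Qpi_one {T : Type*} (Q : T → T → ℂ) {n : ℕ} (t : Fin n → T) : Qpi Q 1 t = 1 := by
  unfold Qpi
  rw [Finset.filter_false_of_mem, Finset.prod_empty]
  intro p _ hp
  exact absurd hp.1 (not_lt.mpr (le_of_lt hp.2))

lemma Qpi_mul_swap {T : Type*} (Q : T → T → ℂ)
    (hherm : ∀ s t, (starRingEnd ℂ) (Q t s) = Q s t)
    (habs : ∀ s t, ‖Q s t‖ = 1)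
    {n : ℕ} (a b : Fin n) (hab : (a : ℕ) + 1 = (b : ℕ))
    (ρ : Equiv.Perm (Fin n)) (t : Fin n → T) :
    Qpi Q (ρ * Equiv.swap a b) t = Q (t a) (t b) * Qpi Q ρ (t ∘ Equiv.swap a b) := by
  have hab' : a ≠ b := by
    intro h; rw [h] at hab; omega
  have ha : a < b := by rw [Fin.lt_def]; omega
  set σ := Equiv.swap a b with hσdef
  have hσa : σ a = b := Equiv.swap_apply_left a b
  have hσb : σ b = a := Equiv.swap_apply_right a b
  have hσo : ∀ x, x ≠ a → x ≠ b → σ x = x := fun x h1 h2 =>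
    Equiv.swap_apply_of_ne_of_ne h1 h2
  have hσσ : ∀ x, σ (σ x) = x := fun x => Equiv.swap_apply_self a b x
  have hmono : ∀ i k : Fin n, i < k → ¬(i = a ∧ k = b) → σ i < σ k := by
    intro i k hik hne
    by_cases hia : i = a
    · subst hia
      have hkb : k ≠ b := fun h => hne ⟨rfl, h⟩
      have hka : k ≠ i := (ne_of_gt hik)
      rw [hσa, hσo k hka hkb]
      rw [Fin.lt_def] at hik ⊢
      have : (k : ℕ) ≠ (b : ℕ) := fun h => hkb (Fin.ext h)
      omega
    · by_cases hib : i = b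
      · subst hib
        have hka : k ≠ a := ne_of_gt (lt_trans ha hik)
        have hkb : k ≠ i := ne_of_gt hik
        rw [hσb, hσo k hka hkb]
        exact lt_trans ha hik
      · rw [hσo i hia hib]
        by_cases hka : k = a
        · subst hka; rw [hσa]; exact lt_trans hik ha
        · by_cases hkb : k = b
          · subst hkb; rw [hσb]
            rw [Fin.lt_def] at hik ⊢
            have : (i : ℕ) ≠ (a : ℕ) := fun h => hia (Fin.ext h)
            omega
          · rw [hσo k hka hkb]; exact hik
  -- rewrite both sides as products over univ
  set F1 : Fin n × Fin n → ℂ := fun p =>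
    if p.1 < p.2 ∧ ρ (σ p.2) < ρ (σ p.1) then Q (t p.1) (t p.2) else 1 with hF1
  set F3 : Fin n × Fin n → ℂ := fun p =>
    if σ p.1 < σ p.2 ∧ ρ (σ p.2) < ρ (σ p.1) then Q (t p.1) (t p.2) else 1 with hF3
  have e1 : Qpi Q (ρ * σ) t = ∏ p : Fin n × Fin n, F1 p := by
    unfold Qpi; rw [Finset.prod_filter]; rfl
  have e2 : Qpi Q ρ (t ∘ σ) = ∏ p : Fin n × Fin n, F3 p := by
    unfold Qpi; rw [Finset.prod_filter]
    exact (Fintype.prod_equiv (Equiv.prodCongr σ σ) F3 _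
      (fun q => by simp only [hF3, Equiv.prodCongr_apply, Prod.map, Function.comp_apply, hσσ])).symm
  -- split off the pairs (a,b) and (b,a)
  have hmem1 : ((a, b) : Fin n × Fin n) ∈ (Finset.univ : Finset (Fin n × Fin n)) :=
    Finset.mem_univ _
  have hmem2 : ((b, a) : Fin n × Fin n) ∈ Finset.univ.erase ((a, b) : Fin n × Fin n) := by
    refine Finset.mem_erase.mpr ⟨?_, Finset.mem_univ _⟩
    simp [Prod.ext_iff, hab'.symm]
  set s : Finset (Fin n × Fin n) := (Finset.univ.erase ((a, b))).erase ((b, a)) with hs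
  have split : ∀ F : Fin n × Fin n → ℂ,
      ∏ p : Fin n × Fin n, F p = F (a, b) * (F (b, a) * ∏ p ∈ s, F p) := by
    intro F
    rw [← Finset.mul_prod_erase _ F hmem1, ← Finset.mul_prod_erase _ F hmem2]
  have hrest : ∏ p ∈ s, F1 p = ∏ p ∈ s, F3 p := by
    refine Finset.prod_congr rfl ?_
    intro p hp
    rw [hs, Finset.mem_erase, Finset.mem_erase] at hp
    have hp1 : p ≠ (b, a) := hp.1
    have hp2 : p ≠ (a, b) := hp.2.1
    have hiff : (p.1 < p.2) ↔ (σ p.1 < σ p.2) := by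
      constructor
      · intro h
        exact hmono _ _ h (fun hc => hp2 (Prod.ext hc.1 hc.2))
      · intro h
        have := hmono _ _ h (fun hc => by
          apply hp1
          have h1 : p.1 = b := by rw [← hσσ p.1, hc.1, hσa]
          have h2 : p.2 = a := by rw [← hσσ p.2, hc.2, hσb]
          exact Prod.ext h1 h2)
        rwa [hσσ, hσσ] at this
    simp only [hF1, hF3, hiff]
  have hF1ab : F1 (a, b) = if ρ a < ρ b then Q (t a) (t b) else 1 := by
    simp only [hF1, hσa, hσb, ha, true_and]
  have hF1ba : F1 (b, a) = 1 := by
    simp only [hF1]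
    rw [if_neg]
    rintro ⟨h, -⟩
    exact absurd h (not_lt.mpr (le_of_lt ha))
  have hF3ab : F3 (a, b) = 1 := by
    simp only [hF3, hσa, hσb]
    rw [if_neg]
    rintro ⟨h, -⟩
    exact absurd h (not_lt.mpr (le_of_lt ha))
  have hF3ba : F3 (b, a) = if ρ b < ρ a then Q (t b) (t a) else 1 := by
    simp only [hF3, hσa, hσb, ha, true_and]
  rw [e1, e2, split F1, split F3, hF1ab, hF1ba, hF3ab, hF3ba, hrest, one_mul, one_mul]
  by_cases hρ : ρ a < ρ b
  · rw [if_pos hρ, if_neg (asymm hρ)]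
    ring
  · have hρ' : ρ b < ρ a := by
      rcases lt_or_eq_of_le (not_lt.mp hρ) with h | h
      · exact h
      · exact absurd (ρ.injective h) hab'.symm
    rw [if_neg (asymm hρ'), if_pos hρ', one_mul]
    have hconj : Q (t b) (t a) = (starRingEnd ℂ) (Q (t a) (t b)) := (hherm (t b) (t a)).symm
    rw [hconj, ← mul_assoc, Complex.mul_conj, Complex.normSq_eq_norm_sq, habs]
    norm_num

/-- Q-symmetrization formula: if `π ↦ Ψ_π` is the multiplicative
extension of `π_j ↦ Ψ_j` (well defined by the braid relations), then
`(Ψ_π f)(t) = Q_{π⁻¹}(t) f(t∘π)` and consequently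
`(P_n f)(t) = (1/n!) Σ_π Q_π(t) f(t∘π⁻¹)`. -/
theorem Qsymmetrization_formula {T : Type*} (Q : T → T → ℂ)
    (hherm : ∀ s t, (starRingEnd ℂ) (Q t s) = Q s t)
    (habs : ∀ s t, ‖Q s t‖ = 1)
    (n : ℕ)
    (Ψ : Equiv.Perm (Fin n) → ((Fin n → T) → ℂ) → ((Fin n → T) → ℂ))
    (hone : Ψ 1 = id)
    (hmul : ∀ π ρ : Equiv.Perm (Fin n), Ψ (π * ρ) = Ψ π ∘ Ψ ρ)
    (hswap : ∀ (j : ℕ) (hj : j + 1 < n),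
        Ψ (Equiv.swap (⟨j, Nat.lt_of_succ_lt hj⟩ : Fin n) ⟨j + 1, hj⟩) = PsiJ Q j hj) :
    (∀ (π : Equiv.Perm (Fin n)) (f : (Fin n → T) → ℂ) (t : Fin n → T),
        Ψ π f t = Qpi Q π⁻¹ t * f (t ∘ ⇑π)) ∧
    (∀ (f : (Fin n → T) → ℂ) (t : Fin n → T),
        ((n.factorial : ℂ))⁻¹ * ∑ π : Equiv.Perm (Fin n), Ψ π f t
          = ((n.factorial : ℂ))⁻¹ * ∑ π : Equiv.Perm (Fin n), Qpi Q π t * f (t ∘ ⇑π⁻¹)) := by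
  have key : ∀ (π : Equiv.Perm (Fin n)) (f : (Fin n → T) → ℂ) (t : Fin n → T),
      Ψ π f t = Qpi Q π⁻¹ t * f (t ∘ ⇑π) := by
    match n, Ψ, hone, hmul, hswap with
    | 0, Ψ, hone, hmul, hswap =>
      intro π f t
      have hπ : π = 1 := Subsingleton.elim π 1
      subst hπ
      rw [hone, inv_one, Qpi_one, one_mul]
      rfl
    | (m + 1), Ψ, hone, hmul, hswap =>
      intro π
      have hπ : π ∈ Submonoid.closure
          (Set.range fun i : Fin m ↦ Equiv.swap i.castSucc i.succ) := by
        rw [Equiv.Perm.mclosure_swap_castSucc_succ]; trivial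
      induction hπ using Submonoid.closure_induction_left with
      | one =>
        intro f t
        rw [hone, inv_one, Qpi_one, one_mul]
        rfl
      | mul_left x hx y hy ih =>
        obtain ⟨i, rfl⟩ := hx
        intro f t
        have hj : (i : ℕ) + 1 < m + 1 := Nat.succ_lt_succ i.isLt
        set a : Fin (m + 1) := ⟨i, Nat.lt_of_succ_lt hj⟩ with hadef
        set b : Fin (m + 1) := ⟨(i : ℕ) + 1, hj⟩ with hbdef
        have hx' : Equiv.swap i.castSucc i.succ = Equiv.swap a b := rfl
        beta_reduce
        rw [hmul, Function.comp_apply, hx', hswap i hj]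
        show Q (t a) (t b) * (Ψ y) f (t ∘ Equiv.swap a b) = _
        rw [ih f (t ∘ Equiv.swap a b)]
        have hinv : (Equiv.swap a b * y)⁻¹ = y⁻¹ * Equiv.swap a b := by
          rw [mul_inv_rev, Equiv.swap_inv]
        rw [hinv, Qpi_mul_swap Q hherm habs a b rfl y⁻¹ t]
        have hcomp : (t ∘ Equiv.swap a b) ∘ ⇑y = t ∘ ⇑(Equiv.swap a b * y) := rfl
        rw [hcomp]
        ring
  refine ⟨key, ?_⟩
  intro f t
  congr 1
  rw [Fintype.sum_equiv (Equiv.inv (Equiv.Perm (Fin n)))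
    (fun π => Ψ π f t) (fun π => Qpi Q π t * f (t ∘ ⇑π⁻¹))
    (fun π => by beta_reduce; rw [key π f t]; simp)]
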